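/- arXiv:1411.5470 — 5 statements merged into one kernel-verified Lean document; each statement's English description precedes it below -/
import Mathlib

section
/- There exists a constant c > 0 (depending on η, β > 0) such that for all sufficiently large t > 0, ∫_{|ξ| ≤ r₀} |ξ|^{2k} | e^{-η|ξ|² t} cos(2√(2/3)|ξ| t) - e^{-β|ξ|² t} |² dξ ≥ c (1+t)^{-3/2 - k}, for any fixed k ≥ 0 and r₀ > 0. -/
open MeasureTheory Set Real

lemma measure_cos_nonpos_lb (ω A B : ℝ) (hω : 0 < ω) :
    ENNReal.ofReal ((B - A - π / ω) / 2) ≤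
      volume {r : ℝ | r ∈ Set.Icc A B ∧ Real.cos (ω * r) ≤ 0} := by
  set δ : ℝ := π / ω with hδ_def
  have hδ : 0 < δ := div_pos Real.pi_pos hω
  set E : Set ℝ := {r : ℝ | r ∈ Set.Icc A B ∧ Real.cos (ω * r) ≤ 0} with hE_def
  rcases le_or_gt (B - A - δ) 0 with h0 | h0
  · simpa using ENNReal.ofReal_le_ofReal (by linarith : (B - A - δ)/2 ≤ 0) |>.trans (by simp)
  · have hcover : Icc A (B - δ) ⊆
        (Icc A (B - δ) ∩ {r | Real.cos (ω * r) ≤ 0}) ∪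
        (Icc A (B - δ) ∩ {r | 0 ≤ Real.cos (ω * r)}) := by
      intro r hr
      rcases le_total (Real.cos (ω * r)) 0 with h | h
      · exact Or.inl ⟨hr, h⟩
      · exact Or.inr ⟨hr, h⟩
    have h1 : Icc A (B - δ) ∩ {r | Real.cos (ω * r) ≤ 0} ⊆ E := by
      rintro r ⟨hr, hc⟩
      simp only [Set.mem_Icc] at hr
      exact ⟨Set.mem_Icc.2 ⟨hr.1, by linarith [hr.2]⟩, hc⟩
    have h2 : Icc A (B - δ) ∩ {r | 0 ≤ Real.cos (ω * r)} ⊆ (fun r => r + δ) ⁻¹' E := by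
      rintro r ⟨hr, hc⟩
      simp only [Set.mem_Icc] at hr
      simp only [Set.mem_setOf_eq] at hc
      have harg : ω * (r + δ) = ω * r + π := by
        rw [mul_add, hδ_def, mul_div_cancel₀ _ hω.ne']
      refine Set.mem_preimage.2 ⟨Set.mem_Icc.2 ⟨by linarith [hr.1], by linarith [hr.2]⟩, ?_⟩
      rw [harg, Real.cos_add_pi]
      linarith
    have hvol : ENNReal.ofReal (B - δ - A) ≤ 2 * volume E := by
      calc ENNReal.ofReal (B - δ - A) = volume (Icc A (B - δ)) := by
            rw [Real.volume_Icc]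
          _ ≤ volume (Icc A (B - δ) ∩ {r | Real.cos (ω * r) ≤ 0}) +
              volume (Icc A (B - δ) ∩ {r | 0 ≤ Real.cos (ω * r)}) :=
            (measure_mono hcover).trans (measure_union_le _ _)
          _ ≤ volume E + volume ((fun r => r + δ) ⁻¹' E) :=
            add_le_add (measure_mono h1) (measure_mono h2)
          _ = 2 * volume E := by
            rw [measure_preimage_add_right, two_mul]
    have : ENNReal.ofReal (B - δ - A) = 2 * ENNReal.ofReal ((B - A - δ)/2) := by
      rw [← ENNReal.ofReal_ofNat, ← ENNReal.ofReal_mul (by norm_num)]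
      congr 1; ring
    rw [this] at hvol
    exact (ENNReal.mul_le_mul_iff_right (by norm_num) (by norm_num)).1 hvol

set_option maxHeartbeats 1000000

/-- Lower bound (3.95): for η, β, r₀ > 0 and k ∈ ℕ there are c > 0 and T > 0 such that
    for all t ≥ T,
    ∫_{|ξ|≤r₀} |ξ|^{2k} |e^{-η|ξ|²t} cos(2√(2/3)|ξ|t) - e^{-β|ξ|²t}|² dξ ≥ c (1+t)^{-3/2-k}. -/
theorem cos_difference_lower_bound (η β r₀ : ℝ) (hη : 0 < η) (hβ : 0 < β)
    (hr₀ : 0 < r₀) (k : ℕ) :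
    ∃ c > 0, ∃ T > 0, ∀ t : ℝ, T ≤ t →
      c * (1 + t) ^ (-(3 : ℝ) / 2 - (k : ℝ)) ≤
        ∫ ξ in Metric.closedBall (0 : EuclideanSpace ℝ (Fin 3)) r₀,
          ‖ξ‖ ^ (2 * k) *
            |Real.exp (-η * ‖ξ‖ ^ 2 * t) * Real.cos (2 * Real.sqrt (2 / 3) * ‖ξ‖ * t)
              - Real.exp (-β * ‖ξ‖ ^ 2 * t)| ^ 2 := by
  set a : ℝ := 2 * Real.sqrt (2 / 3) with ha_def
  have ha : 0 < a := by positivity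
  set κ : ℝ := (volume (Metric.ball (0 : EuclideanSpace ℝ (Fin 3)) 1)).toReal with hκ_def
  have hκ : 0 < κ := ENNReal.toReal_pos (Metric.measure_ball_pos volume _ one_pos).ne'
    measure_ball_lt_top.ne
  refine ⟨3 * κ * Real.exp (-β) ^ 2 / (8 * 4 ^ (k + 1)), by positivity,
    max (max 1 (1 / r₀ ^ 2)) ((4 * π / a) ^ 2), by positivity, fun t ht => ?_⟩
  have ht1 : (1 : ℝ) ≤ t := le_trans (le_trans (le_max_left _ _) (le_max_left _ _)) ht
  have ht0 : (0 : ℝ) < t := lt_of_lt_of_le one_pos ht1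
  set s : ℝ := Real.sqrt t with hs_def
  have hs0 : 0 < s := Real.sqrt_pos.2 ht0
  have hss : s ^ 2 = t := Real.sq_sqrt ht0.le
  have hs1 : 1 ≤ s := by
    rw [hs_def]; rw [show (1:ℝ) = Real.sqrt 1 by simp]; exact Real.sqrt_le_sqrt ht1
  -- 1/s ≤ r₀
  have hr2 : 1 / s ≤ r₀ := by
    have h := le_trans (le_trans (le_max_right 1 _) (le_max_left _ _)) ht
    have : 1 / r₀ ≤ s := by
      have h' : Real.sqrt (1 / r₀ ^ 2) ≤ Real.sqrt t := Real.sqrt_le_sqrt h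
      rwa [show (1:ℝ) / r₀ ^ 2 = (1 / r₀) ^ 2 by ring,
        Real.sqrt_sq (by positivity)] at h'
    rw [div_le_iff₀ hs0]
    rw [div_le_iff₀ hr₀] at this
    linarith [mul_comm r₀ s ▸ this]
  -- π/(a t) ≤ 1/(4 s)
  have hδs : π / (a * t) ≤ 1 / (4 * s) := by
    have h := le_trans (le_max_right _ _) ht
    have h4 : 4 * π / a ≤ s := by
      rw [hs_def, show 4 * π / a = Real.sqrt ((4 * π / a) ^ 2) by
        rw [Real.sqrt_sq (by positivity)]]
      exact Real.sqrt_le_sqrt h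
    rw [div_le_div_iff₀ (by positivity) (by positivity)]
    have hat : a * t = a * s * s := by rw [← hss]; ring
    rw [div_le_iff₀ ha] at h4
    nlinarith [Real.pi_pos]
  set R₁ : ℝ := 1 / (2 * s) with hR₁_def
  set R₂ : ℝ := 1 / s with hR₂_def
  have hR₁0 : 0 < R₁ := by positivity
  have hR₁₂ : R₁ < R₂ := by
    rw [hR₁_def, hR₂_def, div_lt_div_iff₀ (by positivity) hs0]
    nlinarith
  set ω : ℝ := a * t with hω_def
  have hω : 0 < ω := by positivity
  set E : Set ℝ := {r : ℝ | r ∈ Set.Icc R₁ R₂ ∧ Real.cos (ω * r) ≤ 0} with hE_def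
  have hEmeas : MeasurableSet E := by
    apply MeasurableSet.inter measurableSet_Icc
    exact measurableSet_le (Real.measurable_cos.comp (measurable_const_mul ω)) measurable_const
  have hEsub : E ⊆ Set.Icc R₁ R₂ := fun r hr => hr.1
  have hEfin : volume E ≠ ⊤ :=
    ((measure_mono hEsub).trans_lt (by rw [Real.volume_Icc]; exact ENNReal.ofReal_lt_top)).ne
  have hEvol : 1 / (8 * s) ≤ (volume E).toReal := by
    have h1 : ENNReal.ofReal ((R₂ - R₁ - π / ω) / 2) ≤ volume E :=
      measure_cos_nonpos_lb ω R₁ R₂ hω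
    have h2 : 1 / (8 * s) ≤ (R₂ - R₁ - π / ω) / 2 := by
      have hR : R₂ - R₁ = 1 / (2 * s) := by
        rw [hR₁_def, hR₂_def]; field_simp; ring
      have e2 : 1 / (2 * s) = 2 * (1 / (4 * s)) := by field_simp; ring
      have e3 : 1 / (4 * s) = 2 * (1 / (8 * s)) := by field_simp; ring
      linarith [hδs]
    calc 1 / (8 * s) ≤ (R₂ - R₁ - π / ω) / 2 := h2
      _ = (ENNReal.ofReal ((R₂ - R₁ - π / ω) / 2)).toReal := by
          rw [ENNReal.toReal_ofReal ((by positivity : (0:ℝ) ≤ 1 / (8 * s)).trans h2)]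
      _ ≤ (volume E).toReal := ENNReal.toReal_mono hEfin h1
  -- the 1D profile
  set g : ℝ → ℝ := fun r => r ^ (2 * k) *
    |Real.exp (-η * r ^ 2 * t) * Real.cos (a * r * t) - Real.exp (-β * r ^ 2 * t)| ^ 2
    with hg_def
  have hg_cont : Continuous g := by
    apply Continuous.mul (continuous_pow _)
    apply Continuous.pow
    apply Continuous.abs
    fun_prop
  have hg_nn : ∀ r, 0 ≤ g r := fun r =>
    mul_nonneg (by rw [pow_mul]; positivity) (pow_nonneg (abs_nonneg _) 2)
  set F : ℝ → ℝ := fun y => y ^ 2 * (Set.Iic r₀).indicator g y with hF_def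
  have hFind : F = (Set.Iic r₀).indicator (fun y => y ^ 2 * g y) := by
    funext y
    by_cases hy : y ∈ Set.Iic r₀
    · simp only [hF_def, Set.indicator_of_mem hy]
    · simp only [hF_def, Set.indicator_of_notMem hy, mul_zero]
  have hFint : IntegrableOn F (Set.Ioi (0:ℝ)) := by
    rw [hFind, IntegrableOn, integrable_indicator_iff measurableSet_Iic, IntegrableOn,
      Measure.restrict_restrict measurableSet_Iic,
      show Set.Iic r₀ ∩ Set.Ioi (0:ℝ) = Set.Ioc 0 r₀ by rw [Set.inter_comm, Set.Ioi_inter_Iic]]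
    exact (((continuous_pow 2).mul hg_cont).continuousOn.integrableOn_compact
      isCompact_Icc).mono_set Set.Ioc_subset_Icc_self
  have hFnn : ∀ y, 0 ≤ F y := fun y =>
    mul_nonneg (sq_nonneg _) (Set.indicator_nonneg (fun z _ => hg_nn z) y)
  -- reduction of the 3D integral to 1D
  have hIeq : (∫ ξ in Metric.closedBall (0 : EuclideanSpace ℝ (Fin 3)) r₀,
      ‖ξ‖ ^ (2 * k) * |Real.exp (-η * ‖ξ‖ ^ 2 * t) * Real.cos (a * ‖ξ‖ * t)
        - Real.exp (-β * ‖ξ‖ ^ 2 * t)| ^ 2)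
      = 3 * κ * ∫ y in Set.Ioi (0:ℝ), F y := by
    rw [← MeasureTheory.integral_indicator measurableSet_closedBall]
    have hind : (Set.indicator (Metric.closedBall (0 : EuclideanSpace ℝ (Fin 3)) r₀)
        (fun ξ => g ‖ξ‖)) = fun ξ => (Set.Iic r₀).indicator g ‖ξ‖ := by
      funext ξ
      by_cases hξ : ‖ξ‖ ≤ r₀
      · rw [Set.indicator_of_mem (by simpa [Metric.mem_closedBall, dist_zero_right] using hξ),
          Set.indicator_of_mem (Set.mem_Iic.2 hξ)]
      · rw [Set.indicator_of_notMem (by simpa [Metric.mem_closedBall, dist_zero_right] using hξ),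
          Set.indicator_of_notMem (fun h => hξ (Set.mem_Iic.1 h))]
    show (∫ ξ, Set.indicator (Metric.closedBall (0 : EuclideanSpace ℝ (Fin 3)) r₀)
        (fun ξ => g ‖ξ‖) ξ) = _
    rw [hind, MeasureTheory.integral_fun_norm_addHaar volume ((Set.Iic r₀).indicator g)]
    simp only [finrank_euclideanSpace_fin, smul_eq_mul, nsmul_eq_mul]
    norm_num [← hκ_def, hF_def, mul_assoc]
    left; rfl
  -- pointwise lower bound on E
  have hlow : ∀ y ∈ E, Real.exp (-β) ^ 2 * (1 / (4 * t)) ^ (k + 1) ≤ F y := by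
    intro y hy
    obtain ⟨hyI, hyc⟩ := hy
    rw [Set.mem_Icc] at hyI
    obtain ⟨hy1, hy2⟩ := hyI
    have hy0 : 0 < y := lt_of_lt_of_le hR₁0 hy1
    have hyr : y ≤ r₀ := le_trans hy2 hr2
    have hFy : F y = y ^ 2 * g y := by
      rw [hF_def]; simp only []
      rw [Set.indicator_of_mem (Set.mem_Iic.2 hyr)]
    have harg : a * y * t = ω * y := by rw [hω_def]; ring
    have hXle : Real.exp (-η * y ^ 2 * t) * Real.cos (a * y * t) ≤ 0 :=
      mul_nonpos_of_nonneg_of_nonpos (Real.exp_nonneg _) (by rw [harg]; exact hyc)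
    have habs : Real.exp (-β * y ^ 2 * t)
        ≤ |Real.exp (-η * y ^ 2 * t) * Real.cos (a * y * t) - Real.exp (-β * y ^ 2 * t)| := by
      have h1 : Real.exp (-β * y ^ 2 * t)
          ≤ -(Real.exp (-η * y ^ 2 * t) * Real.cos (a * y * t) - Real.exp (-β * y ^ 2 * t)) := by
        linarith
      exact h1.trans (neg_le_abs _)
    have hy2t : y ^ 2 * t ≤ 1 := by
      have hys : y * s ≤ 1 := by
        rw [← one_div_one_div s]
        exact (le_div_iff₀ (by positivity)).1 (by rw [one_div_one_div]; exact hy2)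
      calc y ^ 2 * t = (y * s) ^ 2 := by rw [mul_pow, hss]
        _ ≤ 1 := pow_le_one₀ (mul_nonneg hy0.le hs0.le) hys
    have hexp : Real.exp (-β) ≤ Real.exp (-β * y ^ 2 * t) :=
      Real.exp_le_exp.2 (by nlinarith)
    have hR₁sq : (1 : ℝ) / (4 * t) = R₁ ^ 2 := by
      rw [hR₁_def, div_pow, one_pow, mul_pow, hss]; norm_num
    have hm_eq : Real.exp (-β) ^ 2 * (1 / (4 * t)) ^ (k + 1)
        = R₁ ^ 2 * (R₁ ^ (2 * k) * Real.exp (-β) ^ 2) := by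
      rw [hR₁sq, ← pow_mul]; ring
    rw [hm_eq, hFy, hg_def]
    have hinner : R₁ ^ (2 * k) * Real.exp (-β) ^ 2
        ≤ y ^ (2 * k) * |Real.exp (-η * y ^ 2 * t) * Real.cos (a * y * t)
            - Real.exp (-β * y ^ 2 * t)| ^ 2 :=
      mul_le_mul (pow_le_pow_left₀ hR₁0.le hy1 _)
        (pow_le_pow_left₀ (Real.exp_nonneg _) (hexp.trans habs) 2)
        (by positivity) (by positivity)
    exact mul_le_mul (pow_le_pow_left₀ hR₁0.le hy1 2) hinner (by positivity) (sq_nonneg y)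
  have hEsub' : E ⊆ Set.Ioi (0:ℝ) := fun r hr => lt_of_lt_of_le hR₁0 (Set.mem_Icc.1 hr.1).1
  have hlow2 : Real.exp (-β) ^ 2 * (1 / (4 * t)) ^ (k + 1) * (volume E).toReal
      ≤ ∫ y in E, F y :=
    by have h := setIntegral_ge_of_const_le hEmeas hEfin hlow (hFint.mono_set hEsub')
       rwa [smul_eq_mul, mul_comm, measureReal_def] at h
  have hmono : (∫ y in E, F y) ≤ ∫ y in Set.Ioi (0:ℝ), F y :=
    setIntegral_mono_set hFint (ae_of_all _ hFnn) (HasSubset.Subset.eventuallyLE hEsub')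
  rw [hIeq]
  have hts : t ^ (-(3:ℝ) / 2 - (k:ℝ)) = (t ^ (k + 1) * s)⁻¹ := by
    rw [show -(3:ℝ)/2 - (k:ℝ) = -(((k:ℝ) + 1) + 1/2) by ring, Real.rpow_neg ht0.le,
      Real.rpow_add ht0, show ((k:ℝ) + 1) = ((k + 1 : ℕ) : ℝ) by push_cast; ring,
      Real.rpow_natCast, ← Real.sqrt_eq_rpow, ← hs_def]
  calc 3 * κ * Real.exp (-β) ^ 2 / (8 * 4 ^ (k + 1)) * (1 + t) ^ (-(3:ℝ) / 2 - (k:ℝ))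
      ≤ 3 * κ * Real.exp (-β) ^ 2 / (8 * 4 ^ (k + 1)) * t ^ (-(3:ℝ) / 2 - (k:ℝ)) := by
        apply mul_le_mul_of_nonneg_left _ (by positivity)
        apply Real.rpow_le_rpow_of_nonpos ht0 (by linarith)
        have : (0:ℝ) ≤ (k:ℝ) := Nat.cast_nonneg k
        linarith
    _ = 3 * κ * (Real.exp (-β) ^ 2 * (1 / (4 * t)) ^ (k + 1) * (1 / (8 * s))) := by
        rw [hts]
        have h4t : ((1:ℝ) / (4 * t)) ^ (k + 1) = ((4:ℝ) ^ (k + 1) * t ^ (k + 1))⁻¹ := by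
          rw [div_pow, one_pow, mul_pow, one_div]
        rw [h4t]
        field_simp
    _ ≤ 3 * κ * (Real.exp (-β) ^ 2 * (1 / (4 * t)) ^ (k + 1) * (volume E).toReal) := by
        apply mul_le_mul_of_nonneg_left _ (by positivity)
        exact mul_le_mul_of_nonneg_left hEvol (by positivity)
    _ ≤ 3 * κ * ∫ y in E, F y :=
        mul_le_mul_of_nonneg_left hlow2 (by positivity)
    _ ≤ 3 * κ * ∫ y in Set.Ioi (0:ℝ), F y :=
        mul_le_mul_of_nonneg_left hmono (by positivity)
end

section
/- There exists a constant c > 0 such that for all sufficiently large t > 0, ∫_{|ξ| ≤ r₀} |ξ|^{2k} e^{-2η|ξ|² t} sin²(2√(2/3)|ξ| t) dξ ≥ c (1+t)^{-3/2-k}, for any fixed η > 0, r₀ > 0 and nonnegative integer k. -/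
open MeasureTheory

set_option maxHeartbeats 1000000 in
/-- Lower bound (3.100): for η, r₀ > 0 and k ∈ ℕ there are c > 0 and T > 0 such that
    for all t ≥ T,
    ∫_{|ξ|≤r₀} |ξ|^{2k} e^{-2η|ξ|²t} sin²(2√(2/3)|ξ|t) dξ ≥ c (1+t)^{-3/2-k}. -/
theorem sin_squared_lower_bound (η r₀ : ℝ) (hη : 0 < η) (hr₀ : 0 < r₀) (k : ℕ) :
    ∃ c > 0, ∃ T > 0, ∀ t : ℝ, T ≤ t →
      c * (1 + t) ^ (-(3 : ℝ) / 2 - (k : ℝ)) ≤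
        ∫ ξ in Metric.closedBall (0 : EuclideanSpace ℝ (Fin 3)) r₀,
          ‖ξ‖ ^ (2 * k) * Real.exp (-2 * η * ‖ξ‖ ^ 2 * t) *
            Real.sin (2 * Real.sqrt (2 / 3) * ‖ξ‖ * t) ^ 2 := by
  set V : ℝ := (volume (Metric.ball (0 : EuclideanSpace ℝ (Fin 3)) 1)).toReal with hVdef
  have hV : 0 < V := ENNReal.toReal_pos
    (Metric.measure_ball_pos volume 0 one_pos).ne' measure_ball_lt_top.ne
  clear_value V
  refine ⟨3 * V * Real.exp (-8 * η) / 8, by positivity, 16 + 4 / r₀ ^ 2, by positivity, ?_⟩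
  intro t ht
  have hr4 : (0:ℝ) ≤ 4 / r₀ ^ 2 := by positivity
  have ht16 : (16 : ℝ) ≤ t := by linarith
  have ht0 : (0 : ℝ) < t := by linarith
  -- abbreviations (all made opaque immediately)
  set s : ℝ := Real.sqrt t with hsdef
  set u : ℝ := 1 / s with hudef
  set v : ℝ := 2 / s with hvdef
  set a : ℝ := 2 * Real.sqrt (2 / 3) * t with hadef
  set F : ℝ → ℝ := fun r => r ^ (2*k) * Real.exp (-2 * η * r ^ 2 * t) *
        Real.sin (2 * Real.sqrt (2/3) * r * t) ^ 2 with hFdef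
  set G : ℝ → ℝ := fun y => y ^ 2 * F y with hGdef
  set c₀ : ℝ := u ^ (2*k+2) * Real.exp (-8 * η) with hc0def
  have hs0 : 0 < s := by rw [hsdef]; exact Real.sqrt_pos.mpr ht0
  have hst : s ^ 2 = t := by rw [hsdef]; exact Real.sq_sqrt ht0.le
  have hs4 : (4 : ℝ) ≤ s := by
    rw [hsdef]
    have h := Real.sqrt_le_sqrt ht16
    rwa [show (16 : ℝ) = 4 ^ 2 by norm_num, Real.sqrt_sq (by norm_num : (0:ℝ) ≤ 4)] at h
  have hsr : 2 / r₀ ≤ s := by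
    rw [hsdef]
    have h1 : Real.sqrt (4 / r₀ ^ 2) ≤ Real.sqrt t := Real.sqrt_le_sqrt (by linarith)
    rwa [show (4 : ℝ) / r₀ ^ 2 = (2 / r₀) ^ 2 by rw [div_pow]; norm_num,
      Real.sqrt_sq (by positivity)] at h1
  have hsq23_lb : (1 : ℝ) / 2 ≤ Real.sqrt (2 / 3) := by
    rw [show (1 : ℝ) / 2 = Real.sqrt ((1/2)^2) from (Real.sqrt_sq (by norm_num)).symm]
    exact Real.sqrt_le_sqrt (by norm_num)
  have hsq23_ub : Real.sqrt (2 / 3) ≤ 1 := by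
    rw [show (1 : ℝ) = Real.sqrt 1 from Real.sqrt_one.symm]
    exact Real.sqrt_le_sqrt (by norm_num)
  have ha_lb : t ≤ a := by rw [hadef]; nlinarith
  have ha_ub : a ≤ 2 * t := by rw [hadef]; nlinarith
  -- facts about F, G proved while bodies are transparent
  have hGc : Continuous G := by rw [hGdef, hFdef]; fun_prop
  have hGpos : ∀ y : ℝ, 0 < y → 0 ≤ G y := by
    intro y hy0
    rw [hGdef, hFdef]
    positivity
  have hGeq : ∀ y : ℝ, G y = y ^ (2*k+2) * Real.exp (-2 * η * y ^ 2 * t)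
      * Real.sin (a * y) ^ 2 := by
    intro y
    rw [hGdef, hFdef]
    simp only
    rw [show 2 * Real.sqrt (2/3) * y * t = a * y by rw [hadef]; ring]
    ring
  have hIeq : (∫ ξ in Metric.closedBall (0 : EuclideanSpace ℝ (Fin 3)) r₀,
      ‖ξ‖ ^ (2 * k) * Real.exp (-2 * η * ‖ξ‖ ^ 2 * t) *
        Real.sin (2 * Real.sqrt (2 / 3) * ‖ξ‖ * t) ^ 2)
      = ∫ ξ in Metric.closedBall (0 : EuclideanSpace ℝ (Fin 3)) r₀, F ‖ξ‖ := rfl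
  rw [hIeq]
  clear_value s u v a F G c₀
  -- derived inequalities
  have hu0 : 0 < u := by rw [hudef]; positivity
  have huv : u ≤ v := by
    rw [hudef, hvdef, div_le_div_iff₀ hs0 hs0]; nlinarith
  have hvr : v ≤ r₀ := by
    rw [hvdef, div_le_iff₀ hs0]
    calc (2 : ℝ) = (2 / r₀) * r₀ := by field_simp
    _ ≤ s * r₀ := mul_le_mul_of_nonneg_right hsr hr₀.le
    _ = r₀ * s := mul_comm _ _
  have ha0 : 0 < a := by linarith
  -- step 1: radial reduction
  have e1 : (∫ ξ in Metric.closedBall (0 : EuclideanSpace ℝ (Fin 3)) r₀, F ‖ξ‖)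
      = 3 • (V • ∫ y in Set.Ioi (0:ℝ), y ^ 2 • ((Set.Iic r₀).indicator F y)) := by
    have e1a : (∫ ξ in Metric.closedBall (0 : EuclideanSpace ℝ (Fin 3)) r₀, F ‖ξ‖)
        = ∫ x : EuclideanSpace ℝ (Fin 3), (Set.Iic r₀).indicator F ‖x‖ := by
      rw [← integral_indicator measurableSet_closedBall]
      congr 1
      ext x
      by_cases hx : ‖x‖ ≤ r₀
      · rw [Set.indicator_of_mem (mem_closedBall_zero_iff.mpr hx),
          Set.indicator_of_mem (Set.mem_Iic.mpr hx)]
      · rw [Set.indicator_of_notMem (fun h => hx (mem_closedBall_zero_iff.mp h)),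
          Set.indicator_of_notMem (fun h => hx (Set.mem_Iic.mp h))]
    rw [e1a, hVdef]
    have := MeasureTheory.integral_fun_norm_addHaar
      (volume : Measure (EuclideanSpace ℝ (Fin 3))) ((Set.Iic r₀).indicator F)
    simpa [finrank_euclideanSpace_fin, Measure.real] using this
  -- step 2: indicator to Ioc
  have e2 : (∫ y in Set.Ioi (0:ℝ), y ^ 2 • ((Set.Iic r₀).indicator F y))
      = ∫ y in Set.Ioc (0:ℝ) r₀, G y := by
    have h : (fun y : ℝ => y ^ 2 • ((Set.Iic r₀).indicator F y))
        = fun y => (Set.Iic r₀).indicator G y := by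
      ext y
      by_cases hy : y ∈ Set.Iic r₀
      · rw [Set.indicator_of_mem hy, Set.indicator_of_mem hy, smul_eq_mul, hGdef]
      · rw [Set.indicator_of_notMem hy, Set.indicator_of_notMem hy, smul_zero]
    rw [h, setIntegral_indicator measurableSet_Iic, Set.Ioi_inter_Iic]
  -- step 3: restrict to (u, v]
  have hGnn : 0 ≤ᵐ[volume.restrict (Set.Ioc (0:ℝ) r₀)] G := by
    filter_upwards [ae_restrict_mem measurableSet_Ioc] with y hy
    exact hGpos y hy.1
  have e3 : (∫ y in Set.Ioc u v, G y) ≤ ∫ y in Set.Ioc (0:ℝ) r₀, G y :=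
    setIntegral_mono_set hGc.integrableOn_Ioc hGnn
      (HasSubset.Subset.eventuallyLE (Set.Ioc_subset_Ioc hu0.le hvr))
  -- step 4: pointwise bound
  have e4 : (∫ y in Set.Ioc u v, c₀ * Real.sin (a * y) ^ 2) ≤ ∫ y in Set.Ioc u v, G y := by
    apply setIntegral_mono_on
    · exact (by fun_prop : Continuous fun y => c₀ * Real.sin (a * y) ^ 2).integrableOn_Ioc
    · exact hGc.integrableOn_Ioc
    · exact measurableSet_Ioc
    · intro y hy
      have hy0 : 0 < y := lt_trans hu0 hy.1
      have hyu : u ≤ y := hy.1.le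
      have hys : y * s ≤ 2 := by
        rw [← le_div_iff₀ hs0, ← hvdef]; exact hy.2
      have h1 : u ^ (2*k+2) ≤ y ^ (2*k+2) := pow_le_pow_left₀ hu0.le hyu _
      have h2 : Real.exp (-8 * η) ≤ Real.exp (-2 * η * y ^ 2 * t) := by
        apply Real.exp_le_exp.mpr
        have h4' : (y*s)^2 ≤ 4 := by nlinarith [mul_nonneg hy0.le hs0.le]
        have hyst : y^2 * t = (y*s)^2 := by rw [← hst]; ring
        have hy2t : y^2 * t ≤ 4 := by rw [hyst]; exact h4'
        nlinarith [mul_nonneg hη.le (by linarith : (0:ℝ) ≤ 4 - y^2*t)]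
      rw [hGeq y, hc0def]
      have hsin : (0:ℝ) ≤ Real.sin (a * y) ^ 2 := sq_nonneg _
      exact mul_le_mul_of_nonneg_right
        (mul_le_mul h1 h2 (Real.exp_pos _).le (by positivity)) hsin
  -- step 5: the sine integral
  have e5 : (∫ y in Set.Ioc u v, c₀ * Real.sin (a * y) ^ 2)
      = c₀ * ∫ y in u..v, Real.sin (a * y) ^ 2 := by
    rw [intervalIntegral.integral_of_le huv, ← integral_const_mul]
  have hK : 1 / (8 * s) ≤ ∫ y in u..v, Real.sin (a * y) ^ 2 := by
    have hKeq : (∫ y in u..v, Real.sin (a * y) ^ 2)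
        = a⁻¹ * ((Real.sin (a*u) * Real.cos (a*u) - Real.sin (a*v) * Real.cos (a*v)
        + a*v - a*u) / 2) := by
      rw [intervalIntegral.integral_comp_mul_left (fun x => Real.sin x ^ 2) ha0.ne',
        integral_sin_sq, smul_eq_mul]
    have h1 : (-1 : ℝ) ≤ Real.sin (a*u) * Real.cos (a*u) := by
      nlinarith [Real.neg_one_le_sin (a*u), Real.sin_le_one (a*u),
        Real.neg_one_le_cos (a*u), Real.cos_le_one (a*u)]
    have h2 : Real.sin (a*v) * Real.cos (a*v) ≤ 1 := by
      nlinarith [Real.neg_one_le_sin (a*v), Real.sin_le_one (a*v),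
        Real.neg_one_le_cos (a*v), Real.cos_le_one (a*v)]
    have hvu : a*v - a*u = a / s := by rw [hudef, hvdef]; field_simp; ring
    have key : a / s / 2 - 1 ≤ (Real.sin (a*u) * Real.cos (a*u)
        - Real.sin (a*v) * Real.cos (a*v) + a*v - a*u) / 2 := by
      linarith [h1, h2, hvu]
    have step1 : a⁻¹ * (a / s / 2 - 1) ≤ ∫ y in u..v, Real.sin (a * y) ^ 2 := by
      rw [hKeq]
      exact mul_le_mul_of_nonneg_left key (inv_nonneg.mpr ha0.le)
    have step2 : a⁻¹ * (a / s / 2 - 1) = 1 / (2 * s) - 1 / a := by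
      field_simp
    have ha4s : 4 * s ≤ a := by nlinarith
    have hinva : 1 / a ≤ 1 / (4 * s) := one_div_le_one_div_of_le (by positivity) ha4s
    have e1' : 1 / (2*s) - 1/(8*s) = 3/(8*s) := by field_simp; ring
    have e2' : 1 / (4*s) ≤ 3/(8*s) := by
      rw [div_le_div_iff₀ (by positivity) (by positivity)]
      nlinarith
    linarith [step1, step2]
  -- assemble
  have hc00 : 0 ≤ c₀ := by rw [hc0def]; positivity
  have h56 : c₀ / (8 * s) ≤ ∫ y in Set.Ioc (0:ℝ) r₀, G y := by
    calc c₀ / (8 * s) ≤ c₀ * ∫ y in u..v, Real.sin (a * y) ^ 2 := by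
          rw [div_eq_mul_one_div]
          exact mul_le_mul_of_nonneg_left hK hc00
      _ = ∫ y in Set.Ioc u v, c₀ * Real.sin (a * y) ^ 2 := e5.symm
      _ ≤ ∫ y in Set.Ioc u v, G y := e4
      _ ≤ _ := e3
  have hmain : 3 * V * (c₀ / (8 * s)) ≤
      ∫ ξ in Metric.closedBall (0 : EuclideanSpace ℝ (Fin 3)) r₀, F ‖ξ‖ := by
    rw [e1, e2, nsmul_eq_mul, smul_eq_mul, Nat.cast_ofNat, ← mul_assoc]
    exact mul_le_mul_of_nonneg_left h56 (by positivity)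
  -- power comparison
  have hpow_eq : t ^ (-(3:ℝ)/2 - (k:ℝ)) = (s ^ (2*k+3))⁻¹ := by
    rw [← hst, ← Real.rpow_natCast s 2, ← Real.rpow_mul hs0.le]
    have h : ((2:ℕ):ℝ) * (-(3:ℝ)/2 - (k:ℝ)) = -(((2*k+3 : ℕ)):ℝ) := by push_cast; ring
    rw [h, Real.rpow_neg hs0.le, Real.rpow_natCast]
  have hub : u ^ (2*k+2) / s = (s ^ (2*k+3))⁻¹ := by
    rw [hudef, div_pow, one_pow, div_div, ← pow_succ, one_div]
  have hple : (1 + t) ^ (-(3:ℝ)/2 - (k:ℝ)) ≤ u ^ (2*k+2) / s := by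
    rw [hub, ← hpow_eq]
    apply Real.rpow_le_rpow_of_nonpos ht0 (by linarith)
    have hk0 : (0:ℝ) ≤ (k:ℝ) := Nat.cast_nonneg k
    linarith
  calc 3 * V * Real.exp (-8 * η) / 8 * (1 + t) ^ (-(3:ℝ)/2 - (k:ℝ))
      ≤ 3 * V * Real.exp (-8 * η) / 8 * (u ^ (2*k+2) / s) :=
        mul_le_mul_of_nonneg_left hple (by positivity)
    _ = 3 * V * (c₀ / (8 * s)) := by rw [hc0def]; ring
    _ ≤ _ := hmain
end

section
/- Let Q be a maximal dissipative operator on a Hilbert space H satisfying Re(Qf, f) ≤ -μ‖f‖² for all f ∈ D(Q), with μ > 0. Then for every x > -μ and f ∈ H, ∫_{-∞}^{∞} ‖((x + iy) - Q)^{-1} f‖² dy ≤ π (x + μ)^{-1} ‖f‖². -/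
open MeasureTheory

open Complex Set Filter Topology

set_option linter.unusedSectionVars false
set_option maxHeartbeats 1000000

section Aux

variable {H : Type*} [NormedAddCommGroup H] [InnerProductSpace ℂ H] [CompleteSpace H]
  {μ : ℝ} (Q : H →L[ℂ] H)
  (hdiss : ∀ f : H, (inner ℂ (Q f) f : ℂ).re ≤ -μ * ‖f‖ ^ 2)
  (R : ℂ → H →L[ℂ] H)
  (hR : ∀ lam : ℂ, -μ < lam.re →
    (∀ f : H, R lam (lam • f - Q f) = f) ∧ (∀ f : H, lam • R lam f - Q (R lam f) = f))

include hdiss hR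

/-- Coercivity: `(Re λ + μ)‖R λ f‖² ≤ Re⟪f, R λ f⟫`. -/
lemma res_coercive {lam : ℂ} (hlam : -μ < lam.re) (f : H) :
    (lam.re + μ) * ‖R lam f‖ ^ 2 ≤ (inner ℂ f (R lam f) : ℂ).re := by
  set u := R lam f with hu
  have h2 : lam • u - Q u = f := (hR lam hlam).2 f
  have : (inner ℂ f u : ℂ) = (starRingEnd ℂ lam) * inner ℂ u u - inner ℂ (Q u) u := by
    rw [← h2, inner_sub_left, inner_smul_left]
  have hre : (inner ℂ f u : ℂ).re = lam.re * ‖u‖ ^ 2 - (inner ℂ (Q u) u : ℂ).re := by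
    have h3 : (inner ℂ u u : ℂ) = ((‖u‖ ^ 2 : ℝ) : ℂ) := by
      rw [inner_self_eq_norm_sq_to_K]; norm_cast
    rw [this, h3]
    simp only [Complex.sub_re, Complex.mul_re, Complex.ofReal_re, Complex.ofReal_im,
      Complex.conj_re, Complex.conj_im]
    ring
  have hd := hdiss u
  nlinarith [hd, sq_nonneg ‖u‖]

/-- Norm bound: `(Re λ + μ)‖R λ f‖ ≤ ‖f‖`. -/
lemma res_norm_bound {lam : ℂ} (hlam : -μ < lam.re) (f : H) :
    (lam.re + μ) * ‖R lam f‖ ≤ ‖f‖ := by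
  have h := res_coercive Q hdiss R hR hlam f
  have h2 : (inner ℂ f (R lam f) : ℂ).re ≤ ‖f‖ * ‖R lam f‖ := by
    calc (inner ℂ f (R lam f) : ℂ).re ≤ ‖(inner ℂ f (R lam f) : ℂ)‖ := Complex.re_le_norm _
    _ ≤ ‖f‖ * ‖R lam f‖ := by
        simpa using norm_inner_le_norm (𝕜 := ℂ) f (R lam f)
  rcases eq_or_lt_of_le (norm_nonneg (R lam f)) with hz | hz
  · rw [← hz]; simp [norm_nonneg]
  · have := h.trans h2
    rw [pow_two] at this
    nlinarith

/-- First resolvent identity: `R z v = R λ v + (λ - z) • R z (R λ v)`. -/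
lemma res_first_identity {lam z : ℂ} (hlam : -μ < lam.re) (hz : -μ < z.re) (v : H) :
    R z v = R lam v + (lam - z) • R z (R lam v) := by
  set u := R lam v with hu
  have h2 : lam • u - Q u = v := (hR lam hlam).2 v
  have h1 : R z (z • u - Q u) = u := (hR z hz).1 u
  have hv : (z • u - Q u) + (lam - z) • u = v := by rw [← h2]; module
  calc R z v = R z ((z • u - Q u) + (lam - z) • u) := by rw [hv]
  _ = R z (z • u - Q u) + (lam - z) • R z u := by
      rw [map_add, (R z).map_smul]
  _ = u + (lam - z) • R z u := by rw [h1]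
  _ = R lam v + (lam - z) • R z (R lam v) := by rw [hu]

/-- `λ ↦ R λ v` has derivative `-(R λ (R λ v))` on the half plane. -/
lemma res_hasDerivAt {lam : ℂ} (hlam : -μ < lam.re) (v : H) :
    HasDerivAt (fun z => R z v) (-(R lam (R lam v))) lam := by
  rw [hasDerivAt_iff_isLittleO]
  have hmu0 : 0 < lam.re + μ := by linarith
  have hev : ∀ᶠ z : ℂ in nhds lam, (lam.re + -μ) / 2 < z.re := by
    have : Tendsto (fun z : ℂ => z.re) (nhds lam) (nhds lam.re) :=
      Complex.continuous_re.continuousAt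
    exact this (Ioi_mem_nhds (show (lam.re + -μ) / 2 < lam.re by linarith))
  rw [Asymptotics.isLittleO_iff]
  intro c hc
  set K : ℝ := (2 / (lam.re + μ)) * ‖R lam (R lam v)‖ with hK
  have hKnn : 0 ≤ K :=
    mul_nonneg (le_of_lt (div_pos two_pos hmu0)) (norm_nonneg _)
  have hball : ∀ᶠ z : ℂ in nhds lam, ‖z - lam‖ * K ≤ c := by
    rcases eq_or_lt_of_le hKnn with h0 | h0
    · filter_upwards [Metric.ball_mem_nhds lam one_pos] with z _
      rw [← h0, mul_zero]; exact le_of_lt hc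
    · filter_upwards [Metric.closedBall_mem_nhds lam (show 0 < c / K by positivity)] with z hzb
      rw [Metric.mem_closedBall, dist_eq_norm] at hzb
      calc ‖z - lam‖ * K ≤ (c / K) * K := mul_le_mul_of_nonneg_right hzb (le_of_lt h0)
      _ = c := by field_simp
  filter_upwards [hev, hball] with z hz hzb
  have hzre : -μ < z.re := by
    have : -μ < (lam.re + -μ) / 2 := by linarith
    linarith
  have key : R z v - R lam v - (z - lam) • (-(R lam (R lam v)))
      = ((lam - z) * (lam - z)) • R z (R lam (R lam v)) := by
    have e1 := res_first_identity Q hdiss R hR hlam hzre v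
    have e2 := res_first_identity Q hdiss R hR hlam hzre (R lam v)
    rw [e1, e2]
    module
  rw [key]
  have hb := res_norm_bound Q hdiss R hR hzre (R lam (R lam v))
  have hzmu : 0 < z.re + μ := by linarith
  have hb2 : ‖R z (R lam (R lam v))‖ ≤ (z.re + μ)⁻¹ * ‖R lam (R lam v)‖ := by
    rw [inv_mul_eq_div, le_div_iff₀ hzmu]
    linarith [hb]
  have hb3 : (z.re + μ)⁻¹ ≤ 2 / (lam.re + μ) := by
    have h5 : (lam.re + μ) / 2 ≤ z.re + μ := by linarith [hz]
    calc (z.re + μ)⁻¹ ≤ ((lam.re + μ) / 2)⁻¹ := by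
          apply inv_anti₀ (by positivity) h5
    _ = 2 / (lam.re + μ) := by rw [inv_div]
  have hnorm : ‖lam - z‖ = ‖z - lam‖ := norm_sub_rev _ _
  calc ‖((lam - z) * (lam - z)) • R z (R lam (R lam v))‖
      = ‖lam - z‖ * ‖lam - z‖ * ‖R z (R lam (R lam v))‖ := by
        rw [norm_smul, norm_mul]
  _ ≤ ‖lam - z‖ * ‖lam - z‖ * ((z.re + μ)⁻¹ * ‖R lam (R lam v)‖) := by gcongr
  _ ≤ ‖lam - z‖ * ‖lam - z‖ * ((2 / (lam.re + μ)) * ‖R lam (R lam v)‖) := by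
        gcongr
  _ = ‖z - lam‖ * (‖z - lam‖ * K) := by rw [hK, hnorm]; ring
  _ ≤ ‖z - lam‖ * c := by gcongr
  _ = c * ‖z - lam‖ := by ring

/-- One–step expansion: `R λ g = (λ+a)⁻¹ • (g + R λ (Q g + a • g))`. -/
lemma res_step {lam : ℂ} (hlam : -μ < lam.re) (a : ℂ) (ha : lam + a ≠ 0) (g : H) :
    R lam g = (lam + a)⁻¹ • (g + R lam (Q g + a • g)) := by
  have h1 : R lam (lam • g - Q g) = g := (hR lam hlam).1 g
  have h2 : lam • R lam g - Q (R lam g) = g := (hR lam hlam).2 g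
  have hcomm : R lam (Q g) = Q (R lam g) := by
    have hx : R lam (Q g) = lam • R lam g - g := by
      conv_lhs => rw [show Q g = lam • g - (lam • g - Q g) by abel]
      rw [map_sub, (R lam).map_smul, h1]
    have h2' : lam • R lam g = g + Q (R lam g) := sub_eq_iff_eq_add.mp h2
    rw [hx, h2']; abel
  have h2' : lam • R lam g = g + Q (R lam g) := sub_eq_iff_eq_add.mp h2
  have hq : Q (R lam g) = lam • R lam g - g := by rw [h2']; abel
  have hmul : (lam + a) • R lam g = g + R lam (Q g + a • g) := by
    rw [map_add, (R lam).map_smul, hcomm, hq]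
    module
  rw [← hmul, smul_smul, inv_mul_cancel₀ ha, one_smul]

end Aux

/-- Plancherel-type resolvent bound (3.45): if Q is dissipative with
    Re⟪Qf, f⟫ ≤ -μ‖f‖² and R λ is the resolvent of Q on Re λ > -μ, then for
    every x > -μ and f, ∫_{ℝ} ‖R(x+iy) f‖² dy ≤ π (x+μ)⁻¹ ‖f‖². -/
theorem resolvent_square_integral_bound
    {H : Type*} [NormedAddCommGroup H] [InnerProductSpace ℂ H] [CompleteSpace H]
    (μ : ℝ) (hμ : 0 < μ) (Q : H →L[ℂ] H)
    (hdiss : ∀ f : H, (inner ℂ (Q f) f : ℂ).re ≤ -μ * ‖f‖ ^ 2)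
    (hdiss' : ∀ f : H, (inner ℂ ((ContinuousLinearMap.adjoint Q) f) f : ℂ).re ≤ -μ * ‖f‖ ^ 2)
    (R : ℂ → H →L[ℂ] H)
    (hR : ∀ lam : ℂ, -μ < lam.re →
      (∀ f : H, R lam (lam • f - Q f) = f) ∧ (∀ f : H, lam • R lam f - Q (R lam f) = f)) :
    ∀ x : ℝ, -μ < x → ∀ f : H,
      (∫ y : ℝ, ‖R (x + y * Complex.I) f‖ ^ 2) ≤ Real.pi * (x + μ)⁻¹ * ‖f‖ ^ 2 := by
  intro x hx f
  have hxmu : 0 < x + μ := by linarith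
  set a : ℝ := 1 - x with ha
  set g1 : H := Q f + (a : ℂ) • f with hg1
  set g2 : H := Q g1 + (a : ℂ) • g1 with hg2
  set G : ℂ → ℂ := fun z => inner ℂ f (R z f) with hG
  set φ : ℂ → ℂ := fun z => G z - ((‖f‖ ^ 2 : ℝ) : ℂ) * (z + (a : ℂ))⁻¹ with hφ
  set M : ℝ := ‖f‖ * ‖g1‖ + ‖f‖ * ‖g2‖ / (x + μ) with hM
  have hM0 : 0 ≤ M := by positivity
  -- basic facts about ν = z + a
  have hνre : ∀ z : ℂ, (z + (a : ℂ)).re = z.re - x + 1 := by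
    intro z; simp [Complex.add_re, ha]; ring
  have hνim : ∀ z : ℂ, (z + (a : ℂ)).im = z.im := by
    intro z; simp [Complex.add_im]
  have hνne : ∀ z : ℂ, x ≤ z.re → z + (a : ℂ) ≠ 0 := by
    intro z hz h0
    have h1 := hνre z
    rw [h0] at h1
    simp only [Complex.zero_re] at h1
    linarith
  have hzre : ∀ z : ℂ, x ≤ z.re → -μ < z.re := fun z hz => lt_of_lt_of_le hx hz
  -- expansion of φ
  have hφ_eq : ∀ z : ℂ, x ≤ z.re →
      φ z = ((z + (a : ℂ))⁻¹) ^ 2 * ((inner ℂ f g1 : ℂ) + (inner ℂ f (R z g2) : ℂ)) := by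
    intro z hz
    have hν := hνne z hz
    have e1 : R z f = (z + (a : ℂ))⁻¹ • (f + R z g1) := by
      rw [res_step Q hdiss R hR (hzre z hz) _ hν f, hg1]
    have e2 : R z g1 = (z + (a : ℂ))⁻¹ • (g1 + R z g2) := by
      rw [res_step Q hdiss R hR (hzre z hz) _ hν g1, hg2]
    have hff : (inner ℂ f f : ℂ) = ((‖f‖ ^ 2 : ℝ) : ℂ) := by
      rw [inner_self_eq_norm_sq_to_K]; norm_cast
    have hGz : G z = (z + (a : ℂ))⁻¹ * (((‖f‖ ^ 2 : ℝ) : ℂ)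
        + (z + (a : ℂ))⁻¹ * ((inner ℂ f g1 : ℂ) + (inner ℂ f (R z g2) : ℂ))) := by
      rw [hG]
      simp only
      rw [e1, inner_smul_right, inner_add_right, e2, inner_smul_right, inner_add_right, hff]
    rw [hφ]
    simp only
    rw [hGz]
    field_simp
    ring
  -- bound on φ
  have hφ_bound : ∀ z : ℂ, x ≤ z.re →
      ‖φ z‖ ≤ M / ((z.re - x + 1) ^ 2 + z.im ^ 2) := by
    intro z hz
    have hν := hνne z hz
    have hnsq : Complex.normSq (z + (a : ℂ)) = (z.re - x + 1) ^ 2 + z.im ^ 2 := by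
      rw [Complex.normSq_apply, hνre, hνim]; ring
    have hpos : 0 < (z.re - x + 1) ^ 2 + z.im ^ 2 := by nlinarith [sq_nonneg z.im, hz]
    rw [hφ_eq z hz]
    rw [norm_mul, norm_pow]
    have h1 : ‖(z + (a : ℂ))⁻¹‖ ^ 2 = ((z.re - x + 1) ^ 2 + z.im ^ 2)⁻¹ := by
      rw [norm_inv, inv_pow, ← hnsq, Complex.normSq_eq_norm_sq]
    have h2 : ‖(inner ℂ f g1 : ℂ) + (inner ℂ f (R z g2) : ℂ)‖ ≤ M := by
      have hb1 : ‖(inner ℂ f g1 : ℂ)‖ ≤ ‖f‖ * ‖g1‖ := norm_inner_le_norm _ _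
      have hb2 : ‖(inner ℂ f (R z g2) : ℂ)‖ ≤ ‖f‖ * (‖g2‖ / (x + μ)) := by
        have := norm_inner_le_norm (𝕜 := ℂ) f (R z g2)
        have hrb := res_norm_bound Q hdiss R hR (hzre z hz) g2
        have hzr : 0 < z.re + μ := by linarith [hzre z hz]
        have : ‖R z g2‖ ≤ ‖g2‖ / (z.re + μ) := by
          rw [le_div_iff₀ hzr]; linarith [hrb]
        have h3 : ‖g2‖ / (z.re + μ) ≤ ‖g2‖ / (x + μ) := by
          gcongr <;> linarith
        calc ‖(inner ℂ f (R z g2) : ℂ)‖ ≤ ‖f‖ * ‖R z g2‖ := norm_inner_le_norm _ _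
        _ ≤ ‖f‖ * (‖g2‖ / (x + μ)) :=
            mul_le_mul_of_nonneg_left (le_trans this h3) (norm_nonneg f)
      calc ‖(inner ℂ f g1 : ℂ) + (inner ℂ f (R z g2) : ℂ)‖
          ≤ ‖(inner ℂ f g1 : ℂ)‖ + ‖(inner ℂ f (R z g2) : ℂ)‖ := norm_add_le _ _
      _ ≤ ‖f‖ * ‖g1‖ + ‖f‖ * (‖g2‖ / (x + μ)) := add_le_add hb1 hb2
      _ = M := by rw [hM]; ring
    rw [h1, div_eq_inv_mul]
    exact mul_le_mul_of_nonneg_left h2 (by positivity)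
  -- differentiability of φ
  have hφ_diff : ∀ z : ℂ, x ≤ z.re → DifferentiableAt ℂ φ z := by
    intro z hz
    have hd1 : DifferentiableAt ℂ (fun w => G w) z := by
      have hRd : DifferentiableAt ℂ (fun w => R w f) z :=
        (res_hasDerivAt Q hdiss R hR (hzre z hz) f).differentiableAt
      have : (fun w => G w) = fun w => innerSL ℂ f (R w f) := by
        funext w; rw [hG]; simp [innerSL_apply_apply]
      rw [this]
      exact (innerSL ℂ f).differentiableAt.comp z hRd
    have hd2 : DifferentiableAt ℂ (fun w => ((‖f‖ ^ 2 : ℝ) : ℂ) * (w + (a : ℂ))⁻¹) z := by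
      apply DifferentiableAt.const_mul
      exact (differentiableAt_id.add_const _).inv (hνne z hz)
    exact hd1.sub hd2
  -- continuity of resolvent along vertical lines
  have hRcont : Continuous fun y : ℝ => R ((x : ℂ) + y * Complex.I) f := by
    rw [continuous_iff_continuousAt]
    intro y
    have hline : ContinuousAt (fun y : ℝ => (x : ℂ) + y * Complex.I) y := by fun_prop
    have hre : ((x : ℂ) + (y : ℂ) * Complex.I).re = x := by simp
    have h5 := (res_hasDerivAt Q hdiss R hR
      (show -μ < ((x : ℂ) + (y : ℂ) * Complex.I).re by rw [hre]; exact hx) f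
      ).differentiableAt.continuousAt
    exact ContinuousAt.comp (g := fun z : ℂ => R z f) h5 hline
  have hline_re : ∀ y : ℝ, ((x : ℂ) + (y : ℂ) * Complex.I).re = x := by intro y; simp
  have hline_im : ∀ y : ℝ, ((x : ℂ) + (y : ℂ) * Complex.I).im = y := by intro y; simp
  have hφcont : Continuous fun y : ℝ => φ ((x : ℂ) + y * Complex.I) := by
    rw [continuous_iff_continuousAt]
    intro y
    have hline : ContinuousAt (fun y : ℝ => (x : ℂ) + y * Complex.I) y := by fun_prop
    exact ContinuousAt.comp (g := φ) ((hφ_diff _ (le_of_eq (hline_re y).symm)).continuousAt) hline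
  have hline_re' : ∀ (X y : ℝ), ((X : ℂ) + (y : ℝ) * Complex.I).re = X := by
    intro X y; simp
  have hline_im' : ∀ (X y : ℝ), ((X : ℂ) + (y : ℝ) * Complex.I).im = y := by
    intro X y; simp
  -- bound of φ on the line
  have hφline_bound : ∀ y : ℝ, ‖φ ((x : ℂ) + y * Complex.I)‖ ≤ M * (1 + y ^ 2)⁻¹ := by
    intro y
    have := hφ_bound ((x : ℂ) + y * Complex.I) (le_of_eq (hline_re y).symm)
    rw [hline_re, hline_im] at this
    simpa [div_eq_mul_inv] using this
  have hint_inv : Integrable (fun y : ℝ => M * (1 + y ^ 2)⁻¹) :=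
    integrable_inv_one_add_sq.const_mul M
  have hφline_int : Integrable (fun y : ℝ => φ ((x : ℂ) + y * Complex.I)) := by
    apply Integrable.mono' hint_inv hφcont.aestronglyMeasurable
    exact Filter.Eventually.of_forall hφline_bound
  -- continuity on horizontal rays
  have hhorcont : ∀ T : ℝ, ∀ s : ℝ, x ≤ s → ContinuousAt (fun s : ℝ => φ ((s : ℂ) + (T : ℝ) * Complex.I)) s := by
    intro T s hs
    have hline : ContinuousAt (fun s : ℝ => (s : ℂ) + (T : ℝ) * Complex.I) s := by fun_prop
    have hre : ((s : ℂ) + (T : ℝ) * Complex.I).re = s := by simp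
    exact ContinuousAt.comp (g := φ) ((hφ_diff _ (hre.symm ▸ hs)).continuousAt) hline
  have hhor_re : ∀ s T : ℝ, ((s : ℂ) + (T : ℝ) * Complex.I).re = s := by intro s T; simp
  have hhor_im : ∀ s T : ℝ, ((s : ℂ) + (T : ℝ) * Complex.I).im = T := by intro s T; simp
  -- bound on horizontal rays
  have hhor_bound : ∀ T s : ℝ, x ≤ s →
      ‖φ ((s : ℂ) + (T : ℝ) * Complex.I)‖ ≤ M / ((s - x + 1) ^ 2 + T ^ 2) := by
    intro T s hs
    have := hφ_bound ((s : ℂ) + (T : ℝ) * Complex.I) ((hhor_re s T).symm ▸ hs)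
    rwa [hhor_re, hhor_im] at this
  have hhor_bound2 : ∀ T s : ℝ, x ≤ s →
      ‖φ ((s : ℂ) + (T : ℝ) * Complex.I)‖ ≤ M * (2 * (1 + (s - x) ^ 2)⁻¹) := by
    intro T s hs
    refine le_trans (hhor_bound T s hs) ?_
    have h1 : (1 + (s - x) ^ 2) / 2 ≤ (s - x + 1) ^ 2 + T ^ 2 := by
      nlinarith [sq_nonneg T, sq_nonneg (s - x), sq_nonneg (s - x - 1), hs]
    have h2 : 0 < (1 + (s - x) ^ 2) / 2 := by positivity
    calc M / ((s - x + 1) ^ 2 + T ^ 2) ≤ M / ((1 + (s - x) ^ 2) / 2) := by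
          gcongr
    _ = M * (2 * (1 + (s - x) ^ 2)⁻¹) := by
          field_simp
  -- integrable majorant on Ioi x
  have hmaj_int : IntegrableOn (fun s : ℝ => 2 * (M * (2 * (1 + (s - x) ^ 2)⁻¹))) (Set.Ioi x) := by
    apply Integrable.integrableOn
    have : Integrable (fun s : ℝ => (1 + (s - x) ^ 2)⁻¹) :=
      integrable_inv_one_add_sq.comp_sub_right x
    simpa [mul_assoc] using (this.const_mul (2 * M * 2))
  -- difference of top/bottom boundary values is integrable on `Ioi x`
  have hdiff_meas : ∀ T : ℝ, AEStronglyMeasurable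
      (fun s : ℝ => φ ((s : ℂ) + (-T : ℝ) * Complex.I) - φ ((s : ℂ) + (T : ℝ) * Complex.I))
      (volume.restrict (Set.Ioi x)) := by
    intro T
    apply ContinuousOn.aestronglyMeasurable _ measurableSet_Ioi
    intro s hs
    exact (((hhorcont (-T) s (le_of_lt hs)).sub (hhorcont T s (le_of_lt hs)))).continuousWithinAt
  have hdiff_bound : ∀ T : ℝ, ∀ s : ℝ, x ≤ s →
      ‖φ ((s : ℂ) + (-T : ℝ) * Complex.I) - φ ((s : ℂ) + (T : ℝ) * Complex.I)‖
        ≤ 2 * (M * (2 * (1 + (s - x) ^ 2)⁻¹)) := by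
    intro T s hs
    calc ‖φ ((s : ℂ) + (-T : ℝ) * Complex.I) - φ ((s : ℂ) + (T : ℝ) * Complex.I)‖
        ≤ ‖φ ((s : ℂ) + (-T : ℝ) * Complex.I)‖ + ‖φ ((s : ℂ) + (T : ℝ) * Complex.I)‖ :=
          norm_sub_le _ _
    _ ≤ M * (2 * (1 + (s - x) ^ 2)⁻¹) + M * (2 * (1 + (s - x) ^ 2)⁻¹) :=
          add_le_add (hhor_bound2 (-T) s hs) (hhor_bound2 T s hs)
    _ = 2 * (M * (2 * (1 + (s - x) ^ 2)⁻¹)) := by ring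
  have hdiff_int : ∀ T : ℝ, IntegrableOn
      (fun s : ℝ => φ ((s : ℂ) + (-T : ℝ) * Complex.I) - φ ((s : ℂ) + (T : ℝ) * Complex.I))
      (Set.Ioi x) := by
    intro T
    apply Integrable.mono' hmaj_int (hdiff_meas T)
    rw [ae_restrict_iff' measurableSet_Ioi]
    exact Filter.Eventually.of_forall fun s hs => hdiff_bound T s (le_of_lt hs)
  -- rectangle contour identity
  have rect : ∀ T X : ℝ, x ≤ X →
      Complex.I • (∫ y in (-T)..T, φ ((x : ℂ) + (y : ℝ) * Complex.I))
      = (∫ s in x..X, (φ ((s : ℂ) + (-T : ℝ) * Complex.I) - φ ((s : ℂ) + (T : ℝ) * Complex.I)))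
        + Complex.I • (∫ y in (-T)..T, φ ((X : ℂ) + (y : ℝ) * Complex.I)) := by
    intro T X hX
    have hdiffOn : DifferentiableOn ℂ φ (Set.uIcc x X ×ℂ Set.uIcc (-T) T) := by
      intro z hz
      apply (hφ_diff z ?_).differentiableWithinAt
      rw [Complex.mem_reProdIm] at hz
      have h1 := hz.1
      rw [Set.uIcc_of_le hX] at h1
      exact h1.1
    have h0 := Complex.integral_boundary_rect_eq_zero_of_differentiableOn φ
      ((x : ℂ) + (-T : ℝ) * Complex.I) ((X : ℂ) + (T : ℝ) * Complex.I) (by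
        simpa only [hhor_re, hhor_im] using hdiffOn)
    simp only [hhor_re, hhor_im] at h0
    have hintA : IntervalIntegrable (fun s : ℝ => φ ((s : ℂ) + (-T : ℝ) * Complex.I))
        volume x X := by
      apply ContinuousOn.intervalIntegrable
      intro s hs
      rw [Set.uIcc_of_le hX] at hs
      exact (hhorcont (-T) s hs.1).continuousWithinAt
    have hintB : IntervalIntegrable (fun s : ℝ => φ ((s : ℂ) + (T : ℝ) * Complex.I))
        volume x X := by
      apply ContinuousOn.intervalIntegrable
      intro s hs
      rw [Set.uIcc_of_le hX] at hs
      exact (hhorcont T s hs.1).continuousWithinAt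
    rw [← intervalIntegral.integral_sub hintA hintB] at h0
    simp only [smul_eq_mul] at h0 ⊢
    rw [sub_eq_zero] at h0
    exact h0.symm
  -- the limit X → ∞ : fixed T identity
  have keyB : ∀ T : ℝ, Complex.I • (∫ y in (-T)..T, φ ((x : ℂ) + (y : ℝ) * Complex.I))
      = ∫ s in Set.Ioi x,
          (φ ((s : ℂ) + (-T : ℝ) * Complex.I) - φ ((s : ℂ) + (T : ℝ) * Complex.I)) := by
    intro T
    have h1 : Filter.Tendsto (fun X : ℝ => ∫ s in x..X,
        (φ ((s : ℂ) + (-T : ℝ) * Complex.I) - φ ((s : ℂ) + (T : ℝ) * Complex.I))) Filter.atTop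
        (nhds (∫ s in Set.Ioi x,
          (φ ((s : ℂ) + (-T : ℝ) * Complex.I) - φ ((s : ℂ) + (T : ℝ) * Complex.I)))) :=
      MeasureTheory.intervalIntegral_tendsto_integral_Ioi x (hdiff_int T) Filter.tendsto_id
    have ht : Filter.Tendsto (fun X : ℝ => X - x + 1) Filter.atTop Filter.atTop := by
      apply Filter.tendsto_atTop_add_const_right
      apply Filter.tendsto_atTop_add_const_right
      exact Filter.tendsto_id
    have hb0 : Filter.Tendsto (fun X : ℝ => M * |T - -T| * (((X - x + 1) ^ 2)⁻¹))
        Filter.atTop (nhds 0) := by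
      have h3 := ((tendsto_pow_atTop (two_ne_zero)).comp ht).inv_tendsto_atTop
      have h4 := h3.const_mul (M * |T - -T|)
      rw [mul_zero] at h4
      exact h4
    have h2 : Filter.Tendsto (fun X : ℝ =>
        Complex.I • (∫ y in (-T)..T, φ ((X : ℂ) + (y : ℝ) * Complex.I))) Filter.atTop
        (nhds 0) := by
      apply squeeze_zero_norm' _ hb0
      filter_upwards [Filter.eventually_ge_atTop x] with X hX
      have hXp : (0:ℝ) < (X - x + 1) ^ 2 := by nlinarith
      have hbnd : ∀ y ∈ Set.uIoc (-T) T,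
          ‖φ ((X : ℂ) + (y : ℝ) * Complex.I)‖ ≤ M / ((X - x + 1) ^ 2) := by
        intro y _
        have hz : x ≤ ((X : ℂ) + (y : ℝ) * Complex.I).re := by rw [hline_re']; exact hX
        have := hφ_bound ((X : ℂ) + (y : ℝ) * Complex.I) hz
        rw [hline_re', hline_im'] at this
        refine le_trans this ?_
        gcongr
        · nlinarith [sq_nonneg y]
      have hn := intervalIntegral.norm_integral_le_of_norm_le_const hbnd
      rw [norm_smul]
      simp only [Complex.norm_I, one_mul]
      refine le_trans hn (le_of_eq ?_)
      ring
    have hsum := h1.add h2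
    rw [add_zero] at hsum
    have hev : ∀ᶠ X : ℝ in Filter.atTop, (∫ s in x..X,
          (φ ((s : ℂ) + (-T : ℝ) * Complex.I) - φ ((s : ℂ) + (T : ℝ) * Complex.I)))
        + Complex.I • (∫ y in (-T)..T, φ ((X : ℂ) + (y : ℝ) * Complex.I))
        = Complex.I • (∫ y in (-T)..T, φ ((x : ℂ) + (y : ℝ) * Complex.I)) := by
      filter_upwards [Filter.eventually_ge_atTop x] with X hX
      exact (rect T X hX).symm
    have := Filter.Tendsto.congr' hev hsum
    exact tendsto_nhds_unique tendsto_const_nhds this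
  -- the limit T → ∞ : the line integral of φ vanishes
  have keyC : (∫ y : ℝ, φ ((x : ℂ) + (y : ℝ) * Complex.I)) = 0 := by
    have hL : Filter.Tendsto (fun T : ℝ => ∫ y in (-T)..T, φ ((x : ℂ) + (y : ℝ) * Complex.I))
        Filter.atTop (nhds (∫ y : ℝ, φ ((x : ℂ) + (y : ℝ) * Complex.I))) :=
      MeasureTheory.intervalIntegral_tendsto_integral hφline_int
        tendsto_neg_atTop_atBot Filter.tendsto_id
    have hLs := hL.const_smul Complex.I
    have hR0 : Filter.Tendsto (fun T : ℝ => ∫ s in Set.Ioi x,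
        (φ ((s : ℂ) + (-T : ℝ) * Complex.I) - φ ((s : ℂ) + (T : ℝ) * Complex.I)))
        Filter.atTop (nhds 0) := by
      have h := MeasureTheory.tendsto_integral_filter_of_dominated_convergence
        (l := Filter.atTop) (F := fun (T : ℝ) (s : ℝ) =>
          φ ((s : ℂ) + (-T : ℝ) * Complex.I) - φ ((s : ℂ) + (T : ℝ) * Complex.I))
        (f := fun _ => (0 : ℂ)) (μ := volume.restrict (Set.Ioi x))
        (bound := fun s => 2 * (M * (2 * (1 + (s - x) ^ 2)⁻¹)))
        (Filter.Eventually.of_forall hdiff_meas)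
        (Filter.Eventually.of_forall fun T => (ae_restrict_iff' measurableSet_Ioi).2
          (Filter.Eventually.of_forall fun s hs => hdiff_bound T s (le_of_lt hs)))
        hmaj_int ?_
      · simpa using h
      · rw [ae_restrict_iff' measurableSet_Ioi]
        apply Filter.Eventually.of_forall
        intro s hs
        have hs' : x ≤ s := le_of_lt hs
        have hden : Filter.Tendsto (fun T : ℝ => M * (((s - x + 1) ^ 2 + T ^ 2))⁻¹)
            Filter.atTop (nhds 0) := by
          have h1 : Filter.Tendsto (fun T : ℝ => (s - x + 1) ^ 2 + T ^ 2)
              Filter.atTop Filter.atTop :=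
            Filter.tendsto_atTop_add_const_left _ _ (tendsto_pow_atTop two_ne_zero)
          have h2 := h1.inv_tendsto_atTop.const_mul M
          rwa [mul_zero] at h2
        have t1 : Filter.Tendsto (fun T : ℝ => φ ((s : ℂ) + (-T : ℝ) * Complex.I))
            Filter.atTop (nhds 0) := by
          apply squeeze_zero_norm _ hden
          intro T
          have := hhor_bound (-T) s hs'
          rw [neg_sq, div_eq_mul_inv] at this
          exact this
        have t2 : Filter.Tendsto (fun T : ℝ => φ ((s : ℂ) + (T : ℝ) * Complex.I))
            Filter.atTop (nhds 0) := by
          apply squeeze_zero_norm _ hden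
          intro T
          have := hhor_bound T s hs'
          rw [div_eq_mul_inv] at this
          exact this
        have := t1.sub t2
        rwa [sub_zero] at this
    have heq : (fun T : ℝ => Complex.I • ∫ y in (-T)..T, φ ((x : ℂ) + (y : ℝ) * Complex.I))
        = fun T : ℝ => ∫ s in Set.Ioi x,
          (φ ((s : ℂ) + (-T : ℝ) * Complex.I) - φ ((s : ℂ) + (T : ℝ) * Complex.I)) :=
      funext keyB
    rw [heq] at hLs
    have h0 : Complex.I • (∫ y : ℝ, φ ((x : ℂ) + (y : ℝ) * Complex.I)) = 0 :=
      tendsto_nhds_unique hLs hR0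
    rcases smul_eq_zero.mp h0 with h | h
    · exact absurd h Complex.I_ne_zero
    · exact h
  -- real part decomposition on the line
  have hre_formula : ∀ y : ℝ, (G ((x : ℂ) + (y : ℝ) * Complex.I)).re
      = ‖f‖ ^ 2 * (1 + y ^ 2)⁻¹ + (φ ((x : ℂ) + (y : ℝ) * Complex.I)).re := by
    intro y
    have hν1 : (x : ℂ) + (y : ℝ) * Complex.I + (a : ℂ) = 1 + (y : ℝ) * Complex.I := by
      rw [ha]; push_cast; ring
    have hre1 : ((1 : ℂ) + (y : ℝ) * Complex.I).re = 1 := by simp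
    have him1 : ((1 : ℂ) + (y : ℝ) * Complex.I).im = y := by simp
    have hn1 : Complex.normSq ((1 : ℂ) + (y : ℝ) * Complex.I) = 1 + y ^ 2 := by
      rw [Complex.normSq_apply, hre1, him1]; ring
    have : (φ ((x : ℂ) + (y : ℝ) * Complex.I)).re
        = (G ((x : ℂ) + (y : ℝ) * Complex.I)).re - ‖f‖ ^ 2 * (1 + y ^ 2)⁻¹ := by
      rw [hφ]
      simp only [Complex.sub_re]
      rw [hν1]
      rw [Complex.re_ofReal_mul, Complex.inv_re, hre1, hn1]
      ring
    rw [this]; ring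
  -- integrability of the pieces
  have hint1 : Integrable (fun y : ℝ => ‖f‖ ^ 2 * (1 + y ^ 2)⁻¹) :=
    integrable_inv_one_add_sq.const_mul _
  have hintφre : Integrable (fun y : ℝ => (φ ((x : ℂ) + (y : ℝ) * Complex.I)).re) := by
    simpa using hφline_int.re
  have hintG : Integrable (fun y : ℝ => (G ((x : ℂ) + (y : ℝ) * Complex.I)).re) := by
    have : (fun y : ℝ => (G ((x : ℂ) + (y : ℝ) * Complex.I)).re)
        = fun y : ℝ => ‖f‖ ^ 2 * (1 + y ^ 2)⁻¹ + (φ ((x : ℂ) + (y : ℝ) * Complex.I)).re :=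
      funext hre_formula
    rw [this]
    exact hint1.add hintφre
  -- the value of the line integral of Re G
  have hGint : (∫ y : ℝ, (G ((x : ℂ) + (y : ℝ) * Complex.I)).re) = ‖f‖ ^ 2 * Real.pi := by
    have h1 : (∫ y : ℝ, (G ((x : ℂ) + (y : ℝ) * Complex.I)).re)
        = (∫ y : ℝ, ‖f‖ ^ 2 * (1 + y ^ 2)⁻¹)
          + ∫ y : ℝ, (φ ((x : ℂ) + (y : ℝ) * Complex.I)).re := by
      rw [← integral_add hint1 hintφre]
      congr 1
      exact funext hre_formula
    have h2 : (∫ y : ℝ, ‖f‖ ^ 2 * (1 + y ^ 2)⁻¹) = ‖f‖ ^ 2 * Real.pi := by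
      rw [MeasureTheory.integral_const_mul, integral_univ_inv_one_add_sq]
    have h3 : (∫ y : ℝ, (φ ((x : ℂ) + (y : ℝ) * Complex.I)).re) = 0 := by
      have := integral_re hφline_int
      rw [keyC] at this
      simpa using this
    rw [h1, h2, h3, add_zero]
  -- pointwise coercivity on the line
  have hpt : ∀ y : ℝ, ‖R ((x : ℂ) + (y : ℝ) * Complex.I) f‖ ^ 2
      ≤ (x + μ)⁻¹ * (G ((x : ℂ) + (y : ℝ) * Complex.I)).re := by
    intro y
    have hc := res_coercive Q hdiss R hR
      (show -μ < ((x : ℂ) + (y : ℝ) * Complex.I).re by rw [hline_re]; exact hx) f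
    rw [hline_re] at hc
    calc ‖R ((x : ℂ) + (y : ℝ) * Complex.I) f‖ ^ 2
        = (x + μ)⁻¹ * ((x + μ) * ‖R ((x : ℂ) + (y : ℝ) * Complex.I) f‖ ^ 2) := by
          field_simp
    _ ≤ (x + μ)⁻¹ * (G ((x : ℂ) + (y : ℝ) * Complex.I)).re := by
          gcongr <;> exact hc
  -- integrability of the squared norm
  have hint_h2 : Integrable (fun y : ℝ => ‖R ((x : ℂ) + (y : ℝ) * Complex.I) f‖ ^ 2) := by
    apply Integrable.mono' (hintG.const_mul ((x + μ)⁻¹))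
      ((hRcont.norm.pow 2).aestronglyMeasurable)
    apply Filter.Eventually.of_forall
    intro y
    simp only [Pi.pow_apply, Real.norm_eq_abs, abs_pow, abs_norm]
    exact hpt y
  -- conclusion
  calc (∫ y : ℝ, ‖R ((x : ℂ) + (y : ℝ) * Complex.I) f‖ ^ 2)
      ≤ ∫ y : ℝ, (x + μ)⁻¹ * (G ((x : ℂ) + (y : ℝ) * Complex.I)).re :=
        integral_mono hint_h2 (hintG.const_mul _) hpt
  _ = (x + μ)⁻¹ * ∫ y : ℝ, (G ((x : ℂ) + (y : ℝ) * Complex.I)).re :=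
        MeasureTheory.integral_const_mul _ _
  _ = (x + μ)⁻¹ * (‖f‖ ^ 2 * Real.pi) := by rw [hGint]
  _ = Real.pi * (x + μ)⁻¹ * ‖f‖ ^ 2 := by ring
end

section
/- Define D₀(x) = ((L₁ - x P_r)^{-1} χ₁, χ₁) for x > -μ, where L₁ is self-adjoint with (L₁f,f) ≤ -μ‖P_r f‖², χ₁ ∈ N₁^⊥ with ‖χ₁‖ = 1, and P_r is the projection onto N₁^⊥. Then D₀ is strictly increasing on (-μ, ∞), D₀(x) < D₀(0) = (L₁^{-1}χ₁, χ₁) < 0 for -μ < x < 0, D₀(x) < 0 for x ≥ 0, and consequently x ≠ D₀(x) for all x > -a₀ where a₀ = min{μ, -(L₁^{-1}χ₁, χ₁)} > 0. -/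
/-- Step 1 of Lemma 3.7, abstract form: with D₀(x) = ((L₁ - xP_r)⁻¹χ₁, χ₁), the
    function D₀ is strictly increasing on (-μ,∞), satisfies D₀(x) < D₀(0) < 0 for
    -μ < x < 0 and D₀(x) < 0 for x ≥ 0, and hence x ≠ D₀(x) for all x > -a₀,
    where a₀ = min{μ, -D₀(0)} > 0. -/
theorem real_dispersion_function_no_fixed_point
    {H : Type*} [NormedAddCommGroup H] [InnerProductSpace ℂ H] [CompleteSpace H]
    (μ : ℝ) (hμ : 0 < μ)
    (L P : H →L[ℂ] H)
    (hLsa : ∀ f g : H, (inner ℂ (L f) g : ℂ) = inner ℂ f (L g))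
    (hPsa : ∀ f g : H, (inner ℂ (P f) g : ℂ) = inner ℂ f (P g))
    (hPP : ∀ f : H, P (P f) = P f)
    (hLP : ∀ f : H, L (P f) = P (L f))
    (hcoerc : ∀ f : H, (inner ℂ (L f) f : ℂ).re ≤ -μ * ‖P f‖ ^ 2)
    (χ₁ : H) (hχP : P χ₁ = χ₁) (hχnorm : ‖χ₁‖ = 1)
    (R : ℝ → H →L[ℂ] H)
    (hR : ∀ x : ℝ, -μ < x → ∀ f : H, P f = f →
      R x (L f - (x : ℂ) • f) = f ∧
      L (R x f) - (x : ℂ) • R x f = f ∧ P (R x f) = R x f)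
    (D₀ : ℝ → ℝ) (hD₀ : ∀ x : ℝ, D₀ x = (inner ℂ (R x χ₁) χ₁ : ℂ).re) :
    StrictMonoOn D₀ (Set.Ioi (-μ)) ∧
    (∀ x ∈ Set.Ioo (-μ) (0 : ℝ), D₀ x < D₀ 0) ∧
    D₀ 0 < 0 ∧
    (∀ x : ℝ, 0 ≤ x → D₀ x < 0) ∧
    (0 < min μ (-(D₀ 0)) ∧ ∀ x : ℝ, -(min μ (-(D₀ 0))) < x → x ≠ D₀ x) := by

  -- Key quadratic estimate: ⟨R x f, f⟩ has real part ≤ -(μ+x)‖R x f‖².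
  have key : ∀ x : ℝ, -μ < x → ∀ f : H, P f = f →
      (inner ℂ (R x f) f : ℂ).re ≤ -(μ + x) * ‖R x f‖ ^ 2 := by
    intro x hx f hf
    obtain ⟨h1, h2, h3⟩ := hR x hx f hf
    set u := R x f with hu
    clear_value u
    have e1 : (inner ℂ u f : ℂ) = inner ℂ (L u) u - (x : ℂ) * inner ℂ u u := by
      conv_lhs => rw [← h2]
      rw [inner_sub_right, inner_smul_right, ← hLsa u u]
    have hself : (inner ℂ u u : ℂ).re = ‖u‖ ^ 2 := by
      have := inner_self_eq_norm_sq (𝕜 := ℂ) u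
      simpa using this
    have e2 : (inner ℂ u f : ℂ).re = (inner ℂ (L u) u : ℂ).re - x * ‖u‖ ^ 2 := by
      rw [e1, Complex.sub_re, Complex.re_ofReal_mul, hself]
    have hc := hcoerc u
    rw [h3] at hc
    rw [e2]; nlinarith
  -- nontriviality of R x χ₁
  have Rne : ∀ x : ℝ, -μ < x → R x χ₁ ≠ 0 := by
    intro x hx h0
    obtain ⟨h1, h2, h3⟩ := hR x hx χ₁ hχP
    rw [h0] at h2
    simp only [map_zero, smul_zero, sub_zero] at h2
    rw [← h2] at hχnorm
    simp at hχnorm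
  -- negativity on (-μ, ∞)
  have neg : ∀ x : ℝ, -μ < x → D₀ x < 0 := by
    intro x hx
    have hk := key x hx χ₁ hχP
    have hpos : 0 < ‖R x χ₁‖ := norm_pos_iff.mpr (Rne x hx)
    have hs : 0 < ‖R x χ₁‖ ^ 2 := by positivity
    rw [hD₀]
    nlinarith [mul_pos (show (0:ℝ) < μ + x by linarith) hs]
  -- resolvent identity
  have resol : ∀ x y : ℝ, -μ < x → -μ < y →
      R x χ₁ - R y χ₁ = ((x - y : ℝ) : ℂ) • R x (R y χ₁) := by
    intro x y hx hy
    obtain ⟨h1x, h2x, h3x⟩ := hR x hx χ₁ hχP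
    obtain ⟨h1y, h2y, h3y⟩ := hR y hy χ₁ hχP
    set u := R x χ₁ with hu
    set v := R y χ₁ with hv
    have hP : P (u - v) = u - v := by rw [map_sub, h3x, h3y]
    have hLcomb : L (u - v) - (x : ℂ) • (u - v) = ((x - y : ℝ) : ℂ) • v := by
      have e : L (u - v) - (x : ℂ) • (u - v)
          = (L u - (x : ℂ) • u) - (L v - (y : ℂ) • v) + (((x : ℂ) - (y : ℂ)) • v) := by
        rw [map_sub]; module
      rw [e, h2x, h2y]
      push_cast
      abel
    have h := (hR x hx (u - v) hP).1
    rw [hLcomb, map_smul] at h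
    exact h.symm
  -- inner ℂ product identity: ⟨R x w, χ₁⟩ = ⟨w, R x χ₁⟩
  have step2 : ∀ x : ℝ, -μ < x → ∀ w : H, P w = w →
      (inner ℂ (R x w) χ₁ : ℂ) = inner ℂ w (R x χ₁) := by
    intro x hx w hw
    obtain ⟨_, h2x, _⟩ := hR x hx χ₁ hχP
    obtain ⟨_, h2w, _⟩ := hR x hx w hw
    set u := R x χ₁ with hu
    set g := R x w with hg
    calc (inner ℂ g χ₁ : ℂ) = inner ℂ g (L u - (x : ℂ) • u) := by rw [h2x]
      _ = inner ℂ (L g) u - (starRingEnd ℂ) (x : ℂ) * inner ℂ g u := by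
          rw [inner_sub_right, inner_smul_right, ← hLsa g u, Complex.conj_ofReal]
      _ = inner ℂ (L g - (x : ℂ) • g) u := by
          rw [inner_sub_left, inner_smul_left]
      _ = inner ℂ w u := by rw [h2w]
  -- strict monotonicity
  have mono : StrictMonoOn D₀ (Set.Ioi (-μ)) := by
    intro y hy x hx hyx
    simp only [Set.mem_Ioi] at hy hx
    obtain ⟨h1x, h2x, h3x⟩ := hR x hx χ₁ hχP
    obtain ⟨h1y, h2y, h3y⟩ := hR y hy χ₁ hχP
    set u := R x χ₁ with hu
    set v := R y χ₁ with hv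
    have huv := resol x y hx hy
    have hvu := resol y x hy hx
    rw [← hu, ← hv] at huv hvu
    have hDx : D₀ x = (inner ℂ u χ₁ : ℂ).re := by rw [hD₀ x, hu]
    have hDy : D₀ y = (inner ℂ v χ₁ : ℂ).re := by rw [hD₀ y, hv]
    have hupos : 0 < ‖u‖ := by rw [hu]; exact norm_pos_iff.mpr (Rne x hx)
    clear_value u v
    have h5 : (inner ℂ (u - v) χ₁ : ℂ) = ((x - y : ℝ) : ℂ) * inner ℂ v u := by
      rw [huv, inner_smul_left, Complex.conj_ofReal, step2 x hx v h3y, ← hu]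
    have hv' : v = u + ((y - x : ℝ) : ℂ) • R y u := by
      rw [← hvu]; abel
    have hiv : (inner ℂ v u : ℂ)
        = inner ℂ u u + ((y - x : ℝ) : ℂ) * inner ℂ (R y u) u := by
      rw [hv', inner_add_left, inner_smul_left, Complex.conj_ofReal]
    have hself : (inner ℂ u u : ℂ).re = ‖u‖ ^ 2 := by
      have := inner_self_eq_norm_sq (𝕜 := ℂ) u
      simpa using this
    have hk := key y hy u h3x
    have hRe : (‖u‖ : ℝ) ^ 2 ≤ (inner ℂ v u : ℂ).re := by
      have hre : (inner ℂ v u : ℂ).re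
          = ‖u‖ ^ 2 + (y - x) * (inner ℂ (R y u) u : ℂ).re := by
        rw [hiv, Complex.add_re, Complex.re_ofReal_mul, hself]
      have h0 : (inner ℂ (R y u) u : ℂ).re ≤ 0 := by
        nlinarith [sq_nonneg ‖R y u‖, mul_nonneg (show (0:ℝ) ≤ μ + y by linarith)
          (sq_nonneg ‖R y u‖)]
      rw [hre]
      nlinarith [mul_nonneg (show (0:ℝ) ≤ x - y by linarith)
        (show (0:ℝ) ≤ -(inner ℂ (R y u) u : ℂ).re by linarith)]
    have hd : D₀ x - D₀ y = (x - y) * (inner ℂ v u : ℂ).re := by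
      rw [hDx, hDy, ← Complex.sub_re, ← inner_sub_left, h5,
        Complex.re_ofReal_mul]
    have hre2 : 0 < (inner ℂ v u : ℂ).re :=
      lt_of_lt_of_le (by positivity) hRe
    have := mul_pos (show (0:ℝ) < x - y by linarith) hre2
    linarith
  have hμ0 : -μ < (0 : ℝ) := by linarith
  have hD0 : D₀ 0 < 0 := neg 0 hμ0
  refine ⟨mono, ?_, hD0, ?_, ?_, ?_⟩
  · intro x hx
    exact mono (Set.mem_Ioi.mpr hx.1) (Set.mem_Ioi.mpr hμ0) hx.2
  · intro x hx
    exact neg x (by linarith)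
  · exact lt_min hμ (by linarith)
  · intro x hx heq
    rcases lt_or_ge x 0 with h | h
    · have hxm : -μ < x := by
        have := min_le_left μ (-(D₀ 0)); linarith
      have h1 : D₀ x < D₀ 0 :=
        mono (Set.mem_Ioi.mpr hxm) (Set.mem_Ioi.mpr hμ0) h
      have h2 : min μ (-(D₀ 0)) ≤ -(D₀ 0) := min_le_right _ _
      linarith
    · have := neg x (by linarith)
      linarith
end

section
/- With the setting of the previous statement, if λ = x + iy with y ≠ 0 and x > -a₀/2 satisfies λ = ((L₁ - λP_r)^{-1}χ₁, χ₁), then writing h = (L₁ - λP_r)^{-1}χ₁, one gets ‖h‖ = 1 and 2x = (L₁h, h) ≤ -μ, a contradiction; hence λ ≠ D₀(λ) for all λ ∈ ℂ with Re λ > -a₀/2. -/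
set_option maxHeartbeats 2000000 in

/-- Step 2 of Lemma 3.7, abstract form: with D₀(λ) = ((L₁ - λP_r)⁻¹χ₁, χ₁), any
    fixed point λ = D₀(λ) with Im λ ≠ 0 and Re λ > -a₀/2 would force
    ‖h‖ = 1 and 2Re λ = (L₁h, h) ≤ -μ for h = (L₁ - λP_r)⁻¹χ₁, a contradiction;
    hence λ ≠ D₀(λ) for all λ with Re λ > -a₀/2, where a₀ = min{μ, -D₀(0)}. -/
theorem complex_dispersion_function_no_fixed_point
    {H : Type*} [NormedAddCommGroup H] [InnerProductSpace ℂ H] [CompleteSpace H]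
    (μ : ℝ) (hμ : 0 < μ)
    (L P : H →L[ℂ] H)
    (hLsa : ∀ f g : H, (inner ℂ (L f) g : ℂ) = inner ℂ f (L g))
    (hPsa : ∀ f g : H, (inner ℂ (P f) g : ℂ) = inner ℂ f (P g))
    (hPP : ∀ f : H, P (P f) = P f)
    (hLP : ∀ f : H, L (P f) = P (L f))
    (hcoerc : ∀ f : H, (inner ℂ (L f) f : ℂ).re ≤ -μ * ‖P f‖ ^ 2)
    (χ₁ : H) (hχP : P χ₁ = χ₁) (hχnorm : ‖χ₁‖ = 1)
    (R : ℂ → H →L[ℂ] H)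
    (hR : ∀ lam : ℂ, -μ < lam.re → ∀ f : H, P f = f →
      R lam (L f - lam • f) = f ∧
      L (R lam f) - lam • R lam f = f ∧ P (R lam f) = R lam f)
    (a₀ : ℝ) (ha₀ : a₀ = min μ (-(inner ℂ χ₁ (R 0 χ₁) : ℂ).re)) (ha₀pos : 0 < a₀) :
    ∀ lam : ℂ, -(a₀ / 2) < lam.re → lam ≠ (inner ℂ χ₁ (R lam χ₁) : ℂ) := by
  intro lam hre heq
  have hμa : a₀ ≤ μ := by rw [ha₀]; exact min_le_left _ _
  have hmulam : -μ < lam.re := by linarith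
  obtain ⟨-, hLh, hPh⟩ := hR lam hmulam χ₁ hχP
  set h : H := R lam χ₁ with hh
  -- ⟪L f, f⟫ is real for every f
  have hreal : ∀ f : H, ((inner ℂ (L f) f : ℂ)).im = 0 := by
    intro f
    have h1 : (starRingEnd ℂ) (inner ℂ (L f) f : ℂ) = (inner ℂ (L f) f : ℂ) := by
      rw [inner_conj_symm]; exact (hLsa f f).symm
    have := congrArg Complex.im h1
    simp only [Complex.conj_im] at this
    linarith
  set t : ℝ := (inner ℂ (L h) h : ℂ).re with htdef
  have htc : (inner ℂ (L h) h : ℂ) = (t : ℂ) := by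
    apply Complex.ext
    · simp [htdef]
    · simp [hreal h]
  set n : ℝ := ‖h‖ ^ 2 with hndef
  have hn0 : 0 ≤ n := sq_nonneg _
  -- the fixed point equation: lam = t - conj lam * n
  have key' : (inner ℂ χ₁ h : ℂ) = (t : ℂ) - (starRingEnd ℂ) lam * (n : ℂ) := by
    calc (inner ℂ χ₁ h : ℂ) = inner ℂ (L h - lam • h) h := by rw [hLh]
      _ = inner ℂ (L h) h - (starRingEnd ℂ) lam * inner ℂ h h := by
          rw [inner_sub_left, inner_smul_left]
      _ = (t : ℂ) - (starRingEnd ℂ) lam * (n : ℂ) := by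
          rw [htc, inner_self_eq_norm_sq_to_K, hndef]; norm_cast
  have key : lam = (t : ℂ) - (starRingEnd ℂ) lam * (n : ℂ) := heq.trans key'
  have him : lam.im = lam.im * n := by
    have := congrArg Complex.im key
    simpa [Complex.mul_im, Complex.conj_re, Complex.conj_im] using this
  have hre' : lam.re = t - lam.re * n := by
    have := congrArg Complex.re key
    simpa [Complex.mul_re, Complex.conj_re, Complex.conj_im] using this
  have hcoh : t ≤ -μ * n := by
    have := hcoerc h
    rwa [hPh, ← hndef, ← htdef] at this
  by_cases hy : lam.im = 0
  · -- real case
    have hconj : (starRingEnd ℂ) lam = lam := Complex.conj_eq_iff_im.mpr hy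
    rcases le_or_gt 0 lam.re with hx | hx
    · -- 0 ≤ Re lam : coercivity forces h = 0, contradicting ‖χ₁‖ = 1
      have hx0 : lam.re = 0 := by nlinarith
      have hn00 : n = 0 := by nlinarith
      have hhz : h = 0 := by
        have : ‖h‖ = 0 := by
          have := hndef ▸ hn00.symm
          nlinarith [norm_nonneg h]
        simpa using this
      have : χ₁ = 0 := by
        rw [← hLh, hhz]; simp
      rw [this] at hχnorm
      simp at hχnorm
    · -- Re lam < 0 : the monotonicity/positivity argument
      obtain ⟨-, hLh0, hPh0⟩ := hR 0 (by simpa using hμ) χ₁ hχP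
      set h0 : H := R 0 χ₁ with hh0
      have hLh0' : L h0 = χ₁ := by simpa using hLh0
      obtain ⟨-, hLw, hPw⟩ := hR lam hmulam h0 hPh0
      set w : H := R lam h0 with hw
      -- hLw : L w - lam • w = h0
      set r : ℝ := (inner ℂ (L w) w : ℂ).re with hrdef
      have hrc : r ≤ -μ * ‖w‖ ^ 2 := by
        have := hcoerc w
        rwa [hPw, ← hrdef] at this
      have hcs : -r ≤ ‖L w‖ * ‖w‖ := by
        calc -r ≤ |r| := neg_le_abs r
          _ ≤ ‖(inner ℂ (L w) w : ℂ)‖ := Complex.abs_re_le_norm _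
          _ ≤ ‖L w‖ * ‖w‖ := norm_inner_le_norm _ _
      -- Identity A : ⟪χ₁, w⟫ = ‖L w‖² - conj lam * ⟪w, L w⟫
      have hA : (inner ℂ χ₁ w : ℂ) =
          ((‖L w‖ ^ 2 : ℝ) : ℂ) - (starRingEnd ℂ) lam * (inner ℂ w (L w) : ℂ) := by
        calc (inner ℂ χ₁ w : ℂ) = inner ℂ (L h0) w := by rw [hLh0']
          _ = inner ℂ h0 (L w) := hLsa h0 w
          _ = inner ℂ (L w - lam • w) (L w) := by rw [hLw]
          _ = inner ℂ (L w) (L w) - (starRingEnd ℂ) lam * inner ℂ w (L w) := by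
              rw [inner_sub_left, inner_smul_left]
          _ = ((‖L w‖ ^ 2 : ℝ) : ℂ) - (starRingEnd ℂ) lam * (inner ℂ w (L w) : ℂ) := by
              rw [inner_self_eq_norm_sq_to_K]; norm_cast
      have hwLw : (inner ℂ w (L w) : ℂ).re = r := by
        have : (inner ℂ w (L w) : ℂ) = (starRingEnd ℂ) (inner ℂ (L w) w : ℂ) := by
          rw [inner_conj_symm]
        rw [this, Complex.conj_re, hrdef]
      have hAre : (inner ℂ χ₁ w : ℂ).re = ‖L w‖ ^ 2 - lam.re * r := by
        have := congrArg Complex.re hA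
        rw [Complex.sub_re, Complex.mul_re, Complex.conj_re, Complex.conj_im, hy,
          hwLw] at this
        simpa [← Complex.ofReal_pow] using this
      -- positivity of Re ⟪χ₁, w⟫
      have hApos : 0 ≤ (inner ℂ χ₁ w : ℂ).re := by
        rw [hAre]
        rcases eq_or_lt_of_le (norm_nonneg w) with hb | hb
        · rw [← hb] at hcs hrc
          nlinarith [sq_nonneg ‖L w‖]
        · have hrneg : r ≤ 0 := by nlinarith [mul_pos hb hb]
          have h1 : r ^ 2 ≤ ‖L w‖ ^ 2 * ‖w‖ ^ 2 := by
            nlinarith [mul_nonneg (norm_nonneg (L w)) (norm_nonneg w)]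
          have h2 : 0 ≤ (-r) * ((-r) + lam.re * ‖w‖ ^ 2) := by
            apply mul_nonneg (by linarith)
            nlinarith [mul_pos hb hb]
          nlinarith [h1, h2, mul_pos hb hb]
      -- Identity C : ⟪h, h0⟫ = ⟪χ₁, w⟫
      have hLhval : L h = χ₁ + lam • h := by
        rw [← hLh]; abel
      have hC : (inner ℂ h h0 : ℂ) = inner ℂ χ₁ w := by
        calc (inner ℂ h h0 : ℂ) = inner ℂ h (L w - lam • w) := by rw [hLw]
          _ = inner ℂ h (L w) - lam * inner ℂ h w := by
              rw [inner_sub_right, inner_smul_right]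
          _ = inner ℂ (L h) w - lam * inner ℂ h w := by rw [hLsa h w]
          _ = inner ℂ χ₁ w + (starRingEnd ℂ) lam * inner ℂ h w - lam * inner ℂ h w := by
              rw [hLhval, inner_add_left, inner_smul_left]
          _ = inner ℂ χ₁ w := by rw [hconj]; ring
      -- Identity B : lam = conj ⟪χ₁, h0⟫ + lam * conj ⟪χ₁, w⟫
      have hB : lam = (starRingEnd ℂ) (inner ℂ χ₁ h0 : ℂ)
          + lam * (starRingEnd ℂ) (inner ℂ χ₁ w : ℂ) := by
        calc lam = (inner ℂ χ₁ h : ℂ) := heq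
          _ = inner ℂ (L h0) h := by rw [hLh0']
          _ = inner ℂ h0 (L h) := hLsa h0 h
          _ = inner ℂ h0 (χ₁ + lam • h) := by rw [hLhval]
          _ = inner ℂ h0 χ₁ + lam * inner ℂ h0 h := by
              rw [inner_add_right, inner_smul_right]
          _ = (starRingEnd ℂ) (inner ℂ χ₁ h0 : ℂ)
              + lam * (starRingEnd ℂ) (inner ℂ χ₁ w : ℂ) := by
              rw [← hC, inner_conj_symm, inner_conj_symm]
      have hBre : lam.re = (inner ℂ χ₁ h0 : ℂ).re + lam.re * (inner ℂ χ₁ w : ℂ).re := by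
        have := congrArg Complex.re hB
        rw [Complex.add_re, Complex.mul_re, Complex.conj_re, Complex.conj_re,
          Complex.conj_im, hy] at this
        simpa using this
      have hD0 : (inner ℂ χ₁ h0 : ℂ).re ≤ -a₀ := by
        have : a₀ ≤ -(inner ℂ χ₁ (R 0 χ₁) : ℂ).re := ha₀ ▸ min_le_right _ _
        rw [← hh0] at this
        linarith
      have hneg : lam.re * (inner ℂ χ₁ w : ℂ).re ≤ 0 :=
        mul_nonpos_of_nonpos_of_nonneg (le_of_lt hx) hApos
      linarith
  · -- Im lam ≠ 0 : n = 1 and 2 Re lam = t ≤ -μ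
    have hn1 : n = 1 := by
      have h1 : lam.im * 1 = lam.im * n := by rw [mul_one]; exact him
      exact (mul_left_cancel₀ hy h1).symm
    rw [hn1] at hre' hcoh
    linarith
end
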